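/- Let g(x) = (x^3)/3 + (x^2)/2 + x/6 (as a map on integers, where g(n) is the n-th square pyramidal number). For every integer B and every k ≥ 1, the congruence g(x) + B ≡ 0 (mod 2^k) has a solution x with x ≡ 6n (mod 2^{k}) for some n; in particular g(x) ≡ -B (mod 2^k) is solvable. -/
import Mathlib

lemma pyr_lift : ∀ k : ℕ, ∀ B : ℤ, ∃ n : ℤ, (2:ℤ)^k ∣ 72*n^3 + 18*n^2 + n + B := by
  intro k
  induction k with
  | zero => intro B; exact ⟨0, by simp⟩
  | succ k ih =>
    intro B
    obtain ⟨n, c, hc⟩ := ih B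
    rcases Int.even_or_odd c with ⟨d, hd⟩ | ⟨d, hd⟩
    · exact ⟨n, ⟨d, by rw [hc, hd]; ring⟩⟩
    · refine ⟨n + 2^k, ?_⟩
      have hE : 72*(n+2^k)^3 + 18*(n+2^k)^2 + (n+2^k) + B =
          2^k * (c + (216*n^2 + 216*n*2^k + 72*(2^k)^2 + 36*n + 18*2^k + 1)) := by
        rw [show (72*(n+2^k)^3 + 18*(n+2^k)^2 + (n+2^k) + B) = (72*n^3 + 18*n^2 + n + B) + 2^k * (216*n^2 + 216*n*2^k + 72*(2^k)^2 + 36*n + 18*2^k + 1) from by ring, hc]; ring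
      exact ⟨d + 108*n^2 + 108*n*2^k + 36*(2^k)^2 + 18*n + 9*2^k + 1, by rw [hE, hd]; ring⟩

theorem pyramidal_two_adic_solvable
    (g : ℤ → ℤ) (hg : ∀ x : ℤ, g x = (2 * x ^ 3 + 3 * x ^ 2 + x) / 6)
    (B : ℤ) (k : ℕ) (hk : 1 ≤ k) :
    ∃ x n : ℤ, x ≡ 6 * n [ZMOD (2 : ℤ) ^ k] ∧ g x + B ≡ 0 [ZMOD (2 : ℤ) ^ k] := by
  obtain ⟨n, hn⟩ := pyr_lift k B
  refine ⟨6 * n, n, Int.ModEq.refl _, ?_⟩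
  have hgv : g (6 * n) = 72*n^3 + 18*n^2 + n := by
    rw [hg]
    have : 2 * (6*n) ^ 3 + 3 * (6*n) ^ 2 + (6*n) = 6 * (72*n^3 + 18*n^2 + n) := by ring
    rw [this, Int.mul_ediv_cancel_left _ (by norm_num)]
  rw [hgv]
  exact ((Int.modEq_iff_dvd).mpr (by simpa using hn)).symm
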